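/- Let I be an arc of S¹ = ℝ/ℤ or S¹ itself, and let {f_{p,q}}_{(p,q)∈I²_*} be an intrinsic conic system on I with supports F_{p,q}. For p ∈ I and q ∈ Ī define F*_{p,q} = F_{p,q} if f_{p,q}(p) ≥ 4, and F*_{p,q} = F_{p,q} \ {p} if f_{p,q}(p) = 2. Then for each fixed p ∈ I, the family {F*_{p,q}}_{q∈Ī} is an intrinsic circle system on Ī. -/

import Mathlib

open Filter Topology

noncomputable section

/-- The circle S¹ = ℝ/ℤ. -/
abbrev S1 := AddCircle (1 : ℝ)

/-- The projection ℝ → S¹. -/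
def pr (x : ℝ) : S1 := (x : S1)

/-- The closed arc from `a` to `b` (for real representatives `a ≤ b`). -/
def arcCC (a b : ℝ) : Set S1 := pr '' Set.Icc a b

/-- The half-open arc `[a,b)`. -/
def arcCO (a b : ℝ) : Set S1 := pr '' Set.Ico a b

/-- The half-open arc `(a,b]`. -/
def arcOC (a b : ℝ) : Set S1 := pr '' Set.Ioc a b

/-- The open arc `(a,b)`. -/
def arcOO (a b : ℝ) : Set S1 := pr '' Set.Ioo a b

/-- `I` is an arc of the circle: the image of an interval of positive length
less than 1 (closed, half-open, or open). -/
def IsArc (I : Set S1) : Prop :=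
  ∃ a b : ℝ, a < b ∧ b < a + 1 ∧
    (I = arcCC a b ∨ I = arcCO a b ∨ I = arcOC a b ∨ I = arcOO a b)

/-- `p ≺ q ≺ r` cyclically: the three points admit representatives
`p̃ < q̃ < r̃ < p̃ + 1`. -/
def cyc3 (p q r : S1) : Prop :=
  ∃ a b c : ℝ, pr a = p ∧ pr b = q ∧ pr c = r ∧ a < b ∧ b < c ∧ c < a + 1

/-- `p ≺ q ≺ r ≺ s` cyclically: the four points admit representatives
`p̃ < q̃ < r̃ < s̃ < p̃ + 1`. -/
def cyc4 (p q r s : S1) : Prop :=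
  ∃ a b c d : ℝ, pr a = p ∧ pr b = q ∧ pr c = r ∧ pr d = s ∧
    a < b ∧ b < c ∧ c < d ∧ d < a + 1

/-- `x` is an isolated point of the set `F`. -/
def IsolatedIn (x : S1) (F : Set S1) : Prop :=
  ∃ U : Set S1, IsOpen U ∧ x ∈ U ∧ U ∩ F = {x}

/-- The set `F` has exactly two connected components. -/
def TwoComponents (F : Set S1) : Prop :=
  ∃ x ∈ F, ∃ y ∈ F, connectedComponentIn F x ≠ connectedComponentIn F y ∧
    ∀ z ∈ F, connectedComponentIn F z = connectedComponentIn F x ∨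
      connectedComponentIn F z = connectedComponentIn F y

/-- An intrinsic circle system on an index set `I ⊆ S¹`: a family of closed
sets `F p` (for `p ∈ I`) satisfying axioms (I0)–(I3). -/
structure IsIntrinsicCircleSystem (I : Set S1) (F : S1 → Set S1) : Prop where
  /-- The sets of the family are closed. -/
  isClosed : ∀ p ∈ I, IsClosed (F p)
  /-- (I0) `p ∈ F p`. -/
  mem_self : ∀ p ∈ I, p ∈ F p
  /-- (I1) if `F p` and `F q` meet then they coincide. -/
  eq_of_inter : ∀ p ∈ I, ∀ q ∈ I, (F p ∩ F q).Nonempty → F p = F q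
  /-- (I2) if `p' ∈ F p`, `q' ∈ F q` and `p ≺ q ≺ p' ≺ q'` cyclically then
  `F p = F q`. -/
  eq_of_cyc : ∀ p ∈ I, ∀ q ∈ I, ∀ p' ∈ F p, ∀ q' ∈ F q,
    cyc4 p q p' q' → F p = F q
  /-- (I3) closedness under limits of sequences from the interior of `I`. -/
  mem_of_tendsto : ∀ (pn qn : ℕ → S1) (p q : S1),
    (∀ n, pn n ∈ interior I) → (∀ n, qn n ∈ interior I) →
    p ∈ I → q ∈ I →
    Tendsto pn atTop (nhds p) → Tendsto qn atTop (nhds q) →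
    (∀ n, qn n ∈ F (pn n)) → q ∈ F p

/-- `p ⪯ q ⪯ p' ⪯ q' ≺ p'' ≺ q'' (≺ p)` cyclically, via representatives
`p̃ ≤ q̃ ≤ p̃' ≤ q̃' < p̃'' < q̃'' < p̃ + 1`. -/
def chain6 (p q p' q' p'' q'' : S1) : Prop :=
  ∃ a b c d e g : ℝ, pr a = p ∧ pr b = q ∧ pr c = p' ∧ pr d = q' ∧
    pr e = p'' ∧ pr g = q'' ∧
    a ≤ b ∧ b ≤ c ∧ c ≤ d ∧ d < e ∧ e < g ∧ g < a + 1

/-- The reverse cyclic order `p ⪰ q ⪰ p' ⪰ q' ≻ p'' ≻ q'' (≻ p)`, via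
representatives `p̃ ≥ q̃ ≥ p̃' ≥ q̃' > p̃'' > q̃'' > p̃ - 1`. -/
def chain6rev (p q p' q' p'' q'' : S1) : Prop :=
  ∃ a b c d e g : ℝ, pr a = p ∧ pr b = q ∧ pr c = p' ∧ pr d = q' ∧
    pr e = p'' ∧ pr g = q'' ∧
    b ≤ a ∧ c ≤ b ∧ d ≤ c ∧ e < d ∧ g < e ∧ a - 1 < g

/-- The index set `I²_* = (Ī × Ī) \ {(p,p) : p ∈ Ī \ I}` of an intrinsic conic
system on `I`. -/
def ConicDom (I : Set S1) : Set (S1 × S1) :=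
  {pq | pq.1 ∈ closure I ∧ pq.2 ∈ closure I ∧ (pq.1 = pq.2 → pq.1 ∈ I)}

/-- The support `F_{p,q} = {r : f_{p,q}(r) > 0}`. -/
def suppF (f : S1 → S1 → S1 → ℕ∞) (p q : S1) : Set S1 := {r | f p q r ≠ 0}

/-- An intrinsic conic system on `I`: a family of functions
`f p q : S¹ → {0,2,4,…} ∪ {∞}`, indexed by `(p,q) ∈ I²_*`, satisfying axioms
(A1)–(A8). -/
structure IsIntrinsicConicSystem (I : Set S1) (f : S1 → S1 → S1 → ℕ∞) : Prop where
  /-- The values of the family are even numbers or `∞`. -/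
  even_values : ∀ p q r : S1, (p, q) ∈ ConicDom I →
    f p q r = ⊤ ∨ ∃ k : ℕ, f p q r = ((2 * k : ℕ) : ℕ∞)
  /-- (A1) the supports are closed. -/
  supp_closed : ∀ p q : S1, (p, q) ∈ ConicDom I → IsClosed (suppF f p q)
  /-- (A1) `p, q ∈ F_{p,q}`. -/
  self_mem : ∀ p q : S1, (p, q) ∈ ConicDom I → f p q p ≠ 0 ∧ f p q q ≠ 0
  /-- (A2) symmetry. -/
  symm : ∀ p q : S1, (p, q) ∈ ConicDom I → f p q = f q p
  /-- (A3) if `F_{p,q}` and `F_{p,r}` share a point `s ≠ p`, then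
  `f_{p,q} = f_{p,r}`. -/
  eq_of_common : ∀ p q r s : S1, (p, q) ∈ ConicDom I → (p, r) ∈ ConicDom I →
    s ≠ p → f p q s ≠ 0 → f p r s ≠ 0 → f p q = f p r
  /-- (A4) interlacing in the (possibly reversed) cyclic order forces
  equality. -/
  eq_of_chain : ∀ p q p' q' p'' q'' : S1,
    (p, p') ∈ ConicDom I → (q, q') ∈ ConicDom I →
    f p p' p'' ≠ 0 → f q q' q'' ≠ 0 →
    (chain6 p q p' q' p'' q'' ∨ chain6rev p q p' q' p'' q'') →
    (p = p' → 4 ≤ f p p' p) → (q = q' → 4 ≤ f q q' q) →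
    f p p' = f q q'
  /-- (A5) if `f_{p,q}(r) ≥ 4` and `r ∈ I` then `f_{r,r} = f_{p,q}`. -/
  eq_diag : ∀ p q r : S1, (p, q) ∈ ConicDom I → 4 ≤ f p q r → r ∈ I →
    f r r = f p q
  /-- (A6) lower semicontinuity of multiplicities under limits, with strict
  increase for pairs of distinct points. -/
  limit_mult : ∀ (pn qn rn₁ rn₂ : ℕ → S1) (p q r : S1) (k₁ k₂ : ℕ),
    (∀ n, (pn n, qn n) ∈ ConicDom I) → (p, q) ∈ ConicDom I →
    Tendsto pn atTop (nhds p) → Tendsto qn atTop (nhds q) →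
    (∀ n, rn₁ n ∈ closure I ∧ rn₁ n ∈ suppF f (pn n) (qn n)) →
    (∀ n, rn₂ n ∈ closure I ∧ rn₂ n ∈ suppF f (pn n) (qn n)) →
    r ∈ closure I →
    Tendsto rn₁ atTop (nhds r) → Tendsto rn₂ atTop (nhds r) →
    (∀ n, (k₁ : ℕ∞) ≤ f (pn n) (qn n) (rn₁ n)) →
    (∀ n, (k₂ : ℕ∞) ≤ f (pn n) (qn n) (rn₂ n)) →
    ((max k₁ k₂ : ℕ) : ℕ∞) ≤ f p q r ∧
      ((∀ n, rn₁ n ≠ rn₂ n) → ((max k₁ k₂ : ℕ) : ℕ∞) < f p q r)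
  /-- (A7) the total multiplicity of `f_{p,q}` is at least six. -/
  total_six : ∀ p q : S1, (p, q) ∈ ConicDom I →
    ∃ s : Finset S1, 6 ≤ ∑ r ∈ s, f p q r
  /-- (A8) if `f_{p,q}(p) = 2` then `p` is isolated in `F_{p,q}`. -/
  isolated_of_two : ∀ p q : S1, (p, q) ∈ ConicDom I → f p q p = 2 →
    IsolatedIn p (suppF f p q)

/-- `F*_{p,q}`: the support of `f_{p,q}` if `f_{p,q}(p) ≥ 4`, and the support
with `p` removed if `f_{p,q}(p) = 2`. -/
def Fstar (f : S1 → S1 → S1 → ℕ∞) (p q : S1) : Set S1 :=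
  {r | r ∈ suppF f p q ∧ (r = p → 4 ≤ f p q p)}


/-! ### Auxiliary lemmas -/

section Aux

lemma pr_continuous : Continuous pr := continuous_quotient_mk'

lemma pr_eq_iff (s t : ℝ) : pr s = pr t ↔ ∃ k : ℤ, t - s = k := by
  constructor
  · intro h
    have := (QuotientAddGroup.eq_iff_sub_mem).1 h.symm
    rcases AddSubgroup.mem_zmultiples_iff.1 this with ⟨k, hk⟩
    exact ⟨k, by simpa [zsmul_eq_mul] using hk.symm⟩
  · rintro ⟨k, hk⟩
    have : t - s ∈ AddSubgroup.zmultiples (1:ℝ) :=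
      AddSubgroup.mem_zmultiples_iff.2 ⟨k, by simp [zsmul_eq_mul, hk]⟩
    exact ((QuotientAddGroup.eq_iff_sub_mem).2 this).symm

lemma pr_add_one (s : ℝ) : pr (s + 1) = pr s := by
  rw [pr_eq_iff]; exact ⟨-1, by push_cast; ring⟩

lemma pr_ne (s t : ℝ) (h1 : s < t) (h2 : t < s + 1) : pr s ≠ pr t := by
  intro h
  rcases (pr_eq_iff s t).1 h with ⟨k, hk⟩
  have h0 : (0:ℝ) < k := by rw [← hk]; linarith
  have h1' : (k:ℝ) < 1 := by rw [← hk]; linarith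
  have h2' : (0:ℤ) < k := by exact_mod_cast h0
  have h3' : (1:ℤ) ≤ k := h2'
  have : (1:ℝ) ≤ (k:ℝ) := by exact_mod_cast h3'
  linarith

lemma pr_ne' (s t : ℝ) (h1 : s < t) (h2 : t < s + 1) : pr t ≠ pr s :=
  fun h => pr_ne s t h1 h2 h.symm

lemma pr_rep (z : S1) (a : ℝ) : ∃ s : ℝ, s ∈ Set.Ico a (a+1) ∧ pr s = z := by
  obtain ⟨x, rfl⟩ := QuotientAddGroup.mk'_surjective (AddSubgroup.zmultiples (1:ℝ)) z
  obtain ⟨m, hm, -⟩ := existsUnique_add_zsmul_mem_Ico (zero_lt_one) x a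
  refine ⟨x + m • (1:ℝ), by simpa using hm, ?_⟩
  show _ = pr x
  rw [pr_eq_iff]
  exact ⟨-m, by push_cast [zsmul_eq_mul]; ring⟩

lemma arcCC_isClosed (a b : ℝ) : IsClosed (arcCC a b) :=
  (isCompact_Icc.image pr_continuous).isClosed

lemma exists_closure_arc {I : Set S1} (hI : IsArc I) :
    ∃ a b : ℝ, a < b ∧ b < a + 1 ∧ closure I = arcCC a b := by
  obtain ⟨a, b, hab, hb1, hI4⟩ := hI
  refine ⟨a, b, hab, hb1, ?_⟩
  have hICC : I ⊆ arcCC a b := by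
    rcases hI4 with h | h | h | h <;> subst h
    · exact subset_rfl
    · exact Set.image_mono Set.Ico_subset_Icc_self
    · exact Set.image_mono Set.Ioc_subset_Icc_self
    · exact Set.image_mono Set.Ioo_subset_Icc_self
  have hsub : closure I ⊆ arcCC a b :=
    closure_minimal hICC (arcCC_isClosed a b)
  have hsup : arcCC a b ⊆ closure I := by
    have key : ∀ S : Set ℝ, closure S = Set.Icc a b → I = pr '' S →
        arcCC a b ⊆ closure I := by
      intro S hS hIS
      have : arcCC a b = pr '' closure S := by rw [hS]; rfl
      rw [this, hIS]
      exact (image_closure_subset_closure_image pr_continuous)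
    rcases hI4 with h | h | h | h
    · exact key _ (by rw [closure_Icc]) h
    · exact key _ (closure_Ico hab.ne) h
    · exact key _ (closure_Ioc hab.ne) h
    · exact key _ (closure_Ioo hab.ne) h
  exact le_antisymm hsub hsup

lemma mem_arcCC_iff {a b : ℝ} (hb1 : b < a + 1) {z : S1} {s : ℝ}
    (hs : s ∈ Set.Ico a (a+1)) (hz : pr s = z) : z ∈ arcCC a b ↔ s ≤ b := by
  constructor
  · rintro ⟨s', hs', rfl⟩
    have h' : s' ∈ Set.Ico a (a + 1) := ⟨hs'.1, lt_of_le_of_lt hs'.2 hb1⟩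
    rcases (pr_eq_iff s s').1 hz with ⟨k, hk⟩
    have hk0 : (k:ℝ) = s' - s := by rw [← hk]
    have hlt : |(k:ℝ)| < 1 := by
      rw [hk0, abs_lt]
      constructor <;> [skip; skip] <;>
        · rcases hs with ⟨hs1, hs2⟩; rcases h' with ⟨h1, h2⟩; linarith
    have : k = 0 := by
      have := abs_lt.1 hlt
      have l1 : (-1:ℤ) < k := by exact_mod_cast this.1
      have l2 : (k:ℤ) < 1 := by exact_mod_cast this.2
      omega
    have : s = s' := by rw [this] at hk0; simp at hk0; linarith
    rw [this]; exact hs'.2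
  · intro h
    exact ⟨s, ⟨hs.1, h⟩, hz⟩

end Aux


section Sys

variable {I : Set S1} {f : S1 → S1 → S1 → ℕ∞} {p : S1}

lemma cast2 : ((2:ℕ):ℕ∞) = 2 := rfl
lemma cast4 : ((4:ℕ):ℕ∞) = 4 := rfl

lemma dom_mk (hp : p ∈ I) {w : S1} (hw : w ∈ closure I) : (p, w) ∈ ConicDom I :=
  ⟨subset_closure hp, hw, fun _ => hp⟩

lemma dom_mk' (hp : p ∈ I) {w : S1} (hw : w ∈ closure I) : (w, p) ∈ ConicDom I :=
  ⟨hw, subset_closure hp, fun h => h ▸ hp⟩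

lemma dom_pp (hp : p ∈ I) : (p, p) ∈ ConicDom I :=
  ⟨subset_closure hp, subset_closure hp, fun _ => hp⟩

lemma two_le_of_ne (hf : IsIntrinsicConicSystem I f) {q r : S1}
    (hdom : (p, q) ∈ ConicDom I) (h : f p q r ≠ 0) : 2 ≤ f p q r := by
  rcases hf.even_values p q r hdom with ht | ⟨k, hk⟩
  · rw [ht]; exact le_top
  · rw [hk] at h ⊢
    have hk0 : k ≠ 0 := by rintro rfl; simp at h
    rw [← cast2]
    exact_mod_cast Nat.le_mul_of_pos_right 2 (Nat.pos_of_ne_zero hk0)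

lemma four_le_of_two_lt (hf : IsIntrinsicConicSystem I f) {q r : S1}
    (hdom : (p, q) ∈ ConicDom I) (h : 2 < f p q r) : 4 ≤ f p q r := by
  rcases hf.even_values p q r hdom with ht | ⟨k, hk⟩
  · rw [ht]; exact le_top
  · rw [hk] at h ⊢
    rw [← cast2] at h
    rw [← cast4]
    have : (2:ℕ) < 2 * k := by exact_mod_cast h
    have : 4 ≤ 2 * k := by omega
    exact_mod_cast this

lemma eq_two_of (hf : IsIntrinsicConicSystem I f) {q : S1}
    (hdom : (p, q) ∈ ConicDom I) (h : f p q p ≠ 0) (h4 : ¬ 4 ≤ f p q p) :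
    f p q p = 2 := by
  rcases hf.even_values p q p hdom with ht | ⟨k, hk⟩
  · exact absurd (ht ▸ le_top) h4
  · rw [hk] at h h4 ⊢
    have hk0 : k ≠ 0 := by rintro rfl; simp at h
    have hk2 : ¬ (4:ℕ) ≤ 2 * k := by
      intro hc; exact h4 (by rw [← cast4]; exact_mod_cast hc)
    have : k = 1 := by omega
    rw [this]; norm_num

/-- A sequence in `closure I` approaching a given point of `closure I`
from one side (so never equal to it). -/
lemma exists_approach (hI : IsArc I ∨ I = Set.univ) {z : S1} (hz : z ∈ closure I) :
    ∃ w : ℕ → S1, (∀ n, w n ∈ closure I) ∧ (∀ n, w n ≠ z) ∧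
      Tendsto w atTop (nhds z) := by
  have seq_tendsto : ∀ (s₀ C : ℝ),
      Tendsto (fun n : ℕ => s₀ + C / (n + 2)) atTop (nhds s₀) := by
    intro s₀ C
    have h1 : Tendsto (fun n : ℕ => C / ((n : ℝ) + 2)) atTop (nhds 0) := by
      have h0 := (tendsto_const_div_atTop_nhds_zero_nat C).comp (tendsto_add_atTop_nat 2)
      have heq : (fun n : ℕ => C / ((n:ℝ) + 2)) = (fun n : ℕ => C / (n:ℝ)) ∘ (fun a => a + 2) := by
        funext n; norm_num [Function.comp]
      rw [heq]; exact h0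
    have h2 := (tendsto_const_nhds (x := s₀) (f := atTop (α := ℕ))).add h1
    simpa using h2
  have prtend : ∀ (s₀ : ℝ) (dd : ℕ → ℝ), Tendsto (fun n : ℕ => dd n) atTop (nhds s₀) →
      Tendsto (fun n => pr (dd n)) atTop (nhds (pr s₀)) := by
    intro s₀ dd h
    exact (pr_continuous.tendsto s₀).comp h
  rcases hI with hI | hI
  · obtain ⟨α, β, hαβ, hβ1, hcl⟩ := exists_closure_arc hI
    obtain ⟨s, hs, hpr⟩ := pr_rep z α
    have hsβ : s ≤ β := by
      rw [hcl] at hz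
      exact (mem_arcCC_iff hβ1 hs hpr).1 hz
    rcases lt_or_eq_of_le hsβ with hlt | heq
    · -- approach from the right
      refine ⟨fun n => pr (s + (β - s) / (n + 2)), ?_, ?_, ?_⟩
      · intro n
        rw [hcl]
        have h2 : (0:ℝ) < (n:ℝ) + 2 := by positivity
        have hd0 : 0 < (β - s) / (n + 2) := div_pos (by linarith) h2
        have hd1 : (β - s) / (n + 2) ≤ β - s := by
          rw [div_le_iff₀ h2]; nlinarith
        exact ⟨s + (β - s) / (n + 2), ⟨by linarith [hs.1], by linarith⟩, rfl⟩
      · intro n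
        rw [← hpr]
        have h2 : (0:ℝ) < (n:ℝ) + 2 := by positivity
        have hd0 : 0 < (β - s) / (n + 2) := div_pos (by linarith) h2
        have hd1 : (β - s) / (n + 2) < 1 := by
          rw [div_lt_iff₀ h2]
          have : β - s < 1 := by linarith [hs.1]
          nlinarith
        exact pr_ne' s (s + (β - s) / (n + 2)) (by linarith) (by linarith)
      · rw [← hpr]; exact prtend s _ (seq_tendsto s (β - s))
    · -- s = β; approach from the left
      refine ⟨fun n => pr (s + (α - s) / (n + 2)), ?_, ?_, ?_⟩
      · intro n
        rw [hcl]
        have h2 : (0:ℝ) < (n:ℝ) + 2 := by positivity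
        have hαs : α - s < 0 := by rw [← heq] at hαβ; linarith
        have hd0 : (α - s) / (n + 2) < 0 := by
          apply div_neg_of_neg_of_pos hαs h2
        have hd1 : α - s ≤ (α - s) / (n + 2) := by
          rw [le_div_iff₀ h2]; nlinarith
        exact ⟨s + (α - s) / (n + 2), ⟨by linarith, by linarith⟩, rfl⟩
      · intro n
        rw [← hpr]
        have h2 : (0:ℝ) < (n:ℝ) + 2 := by positivity
        have hαs : α - s < 0 := by rw [← heq] at hαβ; linarith
        have hd0 : (α - s) / (n + 2) < 0 := div_neg_of_neg_of_pos hαs h2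
        have hd1 : -1 < (α - s) / (n + 2) := by
          rw [lt_div_iff₀ h2]
          have hs2 := hs.2
          have h3 : -1 < α - s := by linarith
          nlinarith
        exact fun hcon => pr_ne (s + (α - s) / (n + 2)) s (by linarith) (by linarith) hcon
      · rw [← hpr]; exact prtend s _ (seq_tendsto s (α - s))
  · -- I = univ
    obtain ⟨s, hs, hpr⟩ := pr_rep z 0
    refine ⟨fun n => pr (s + 1 / (n + 2)), ?_, ?_, ?_⟩
    · intro n; rw [hI]; simp
    · intro n
      rw [← hpr]
      have h2 : (0:ℝ) < (n:ℝ) + 2 := by positivity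
      have hd0 : 0 < 1 / ((n:ℝ) + 2) := by positivity
      have hd1 : 1 / ((n:ℝ) + 2) < 1 := by
        rw [div_lt_iff₀ h2]; nlinarith
      exact pr_ne' s (s + 1 / (n + 2)) (by linarith) (by linarith)
    · rw [← hpr]; exact prtend s _ (seq_tendsto s 1)

/-- `f p p p ≥ 4`. -/
lemma four_le_diag (hI : IsArc I ∨ I = Set.univ) (hf : IsIntrinsicConicSystem I f)
    (hp : p ∈ I) : 4 ≤ f p p p := by
  obtain ⟨w, hmem, hne, htend⟩ := exists_approach hI (subset_closure hp)
  have hdom : ∀ n, ((fun _ => p) n, w n) ∈ ConicDom I := fun n => dom_mk hp (hmem n)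
  have h := hf.limit_mult (fun _ => p) w w (fun _ => p) p p p 2 2 hdom (dom_pp hp)
    tendsto_const_nhds htend
    (fun n => ⟨hmem n, (hf.self_mem p (w n) (hdom n)).2⟩)
    (fun n => ⟨subset_closure hp, (hf.self_mem p (w n) (hdom n)).1⟩)
    (subset_closure hp) htend tendsto_const_nhds
    (fun n => two_le_of_ne hf (hdom n) (hf.self_mem p (w n) (hdom n)).2)
    (fun n => two_le_of_ne hf (hdom n) (hf.self_mem p (w n) (hdom n)).1)
  have h2 := h.2 (fun n => hne n)
  have h3 : (2:ℕ∞) < f p p p := by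
    rw [← cast2]; simpa using h2
  exact four_le_of_two_lt hf (dom_pp hp) h3


/-- Dichotomy: in the configuration `x ≺ pz ≺ y ≺ uz (≺ x)` with
`pz, uz ∈ closure I`, at least one of `x, y` lies in `closure I`. -/
lemma dichot {I : Set S1} (hI : IsArc I ∨ I = Set.univ) {x y pz uz : S1} {c d t e : ℝ}
    (px : pr c = x) (py : pr d = y) (ppz : pr t = pz) (pu : pr e = uz)
    (h1 : c < t) (h2 : t < d) (h3 : d < e) (h4 : e < c + 1)
    (hpz : pz ∈ closure I) (hu : uz ∈ closure I) :
    x ∈ closure I ∨ y ∈ closure I := by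
  rcases hI with hI | hI
  · obtain ⟨α, β, hαβ, hβ1, hcl⟩ := exists_closure_arc hI
    by_contra hcon
    push_neg at hcon
    obtain ⟨hx, hy⟩ := hcon
    obtain ⟨sx, hsx, prx⟩ := pr_rep x α
    obtain ⟨sy, hsy, pry⟩ := pr_rep y α
    obtain ⟨st, hst, prt⟩ := pr_rep pz α
    obtain ⟨se, hse, pre⟩ := pr_rep uz α
    rw [hcl] at hx hy hpz hu
    have hxβ : β < sx := lt_of_not_ge (fun hh => hx ((mem_arcCC_iff hβ1 hsx prx).2 hh))
    have hyβ : β < sy := lt_of_not_ge (fun hh => hy ((mem_arcCC_iff hβ1 hsy pry).2 hh))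
    have htβ : st ≤ β := (mem_arcCC_iff hβ1 hst prt).1 hpz
    have heβ : se ≤ β := (mem_arcCC_iff hβ1 hse pre).1 hu
    obtain ⟨m, hm⟩ := (pr_eq_iff c sx).1 (px.trans prx.symm)
    obtain ⟨n, hn⟩ := (pr_eq_iff d sy).1 (py.trans pry.symm)
    obtain ⟨k, hk⟩ := (pr_eq_iff t st).1 (ppz.trans prt.symm)
    obtain ⟨j, hj⟩ := (pr_eq_iff e se).1 (pu.trans pre.symm)
    -- window bounds
    have w1 : st - sx < 1 := by linarith [hst.1, hsx.2, hst.2, hsx.1]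
    have w2 : st - sy > -1 := by linarith [hst.1, hsy.2]
    have w3 : se - sy < 1 := by linarith [hse.2, hsy.1]
    have w4 : se - sx > -1 := by linarith [hse.1, hsx.2]
    -- integer bounds
    have K1 : k ≤ m := by
      have hr : ((k - m : ℤ):ℝ) < 1 := by push_cast; linarith
      have : (k - m : ℤ) < 1 := by exact_mod_cast hr
      omega
    have K2 : n ≤ k := by
      have hr : ((k - n : ℤ):ℝ) > -1 := by push_cast; linarith
      have : (-1 : ℤ) < k - n := by exact_mod_cast hr
      omega
    have K3 : j ≤ n := by
      have hr : ((j - n : ℤ):ℝ) < 1 := by push_cast; linarith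
      have : (j - n : ℤ) < 1 := by exact_mod_cast hr
      omega
    have K4 : m - 1 ≤ j := by
      have hr : ((j - m : ℤ):ℝ) > -2 := by push_cast; linarith
      have : (-2 : ℤ) < j - m := by exact_mod_cast hr
      omega
    have C1 : k ≠ m := by
      intro hkm
      have : (k:ℝ) = (m:ℝ) := by exact_mod_cast hkm
      -- then sx < st, contradicting β < sx and st ≤ β
      linarith
    have C2 : j ≠ n := by
      intro hjn
      have : (j:ℝ) = (n:ℝ) := by exact_mod_cast hjn
      linarith
    omega
  · left; rw [hI, closure_univ]; trivial


/-- The main interlacing lemma: axiom (I2) for the family `F*`. -/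
lemma key_eq {I : Set S1} {f : S1 → S1 → S1 → ℕ∞} {p : S1}
    (hI : IsArc I ∨ I = Set.univ) (hf : IsIntrinsicConicSystem I f) (hp : p ∈ I)
    {u v x y : S1} (hu : u ∈ closure I) (hv : v ∈ closure I)
    (hx : x ∈ Fstar f p u) (hy : y ∈ Fstar f p v) (hcyc : cyc4 u v x y) :
    f p u = f p v := by
  obtain ⟨a, b, c, d, pu, pv, px, py, hab, hbc, hcd, hda⟩ := hcyc
  obtain ⟨fx, hx4⟩ := hx
  obtain ⟨fy, hy4⟩ := hy
  replace fx : f p u x ≠ 0 := fx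
  replace fy : f p v y ≠ 0 := fy
  obtain ⟨t, ⟨hta, htlt⟩, hpt⟩ := pr_rep p a
  have four := four_le_diag hI hf hp
  have domu : (p, u) ∈ ConicDom I := dom_mk hp hu
  have domv : (p, v) ∈ ConicDom I := dom_mk hp hv
  have domu' : (u, p) ∈ ConicDom I := dom_mk' hp hu
  have domv' : (v, p) ∈ ConicDom I := dom_mk' hp hv
  have hsymu : f u p = f p u := (hf.symm p u domu).symm
  have hsymv : f v p = f p v := (hf.symm p v domv).symm
  have fupx : f u p x ≠ 0 := by rw [hsymu]; exact fx
  have fvpy : f v p y ≠ 0 := by rw [hsymv]; exact fy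
  rcases le_or_gt t b with h1 | h1
  · -- Case 1 : u ⪯ p ⪯ v
    have hchain : chain6 u p p v x y :=
      ⟨a, t, t, b, c, d, pu, hpt, hpt, pv, px, py,
        hta, le_refl t, h1, hbc, hcd, hda⟩
    have := hf.eq_of_chain u p p v x y domu' domv fupx fy (Or.inl hchain)
      (fun h => by rw [h]; exact four) (fun h => by rw [← h]; exact four)
    rw [hsymu] at this; exact this
  · rcases lt_trichotomy t c with h2 | h2 | h2
    · -- Case 2 : v ≺ p ≺ x
      have hchain : chain6 u v p p x y :=
        ⟨a, b, t, t, c, d, pu, pv, hpt, hpt, px, py,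
          hab.le, h1.le, le_refl t, h2, hcd, hda⟩
      have := hf.eq_of_chain u v p p x y domu' domv' fupx fvpy (Or.inl hchain)
        (fun h => by rw [h]; exact four) (fun h => by rw [h]; exact four)
      rw [hsymu, hsymv] at this; exact this
    · -- Case 3 : p = x
      have hxp : x = p := by rw [← px, ← hpt, h2]
      have h4u : 4 ≤ f p u p := hx4 hxp
      have hdiag : f p p = f p u := hf.eq_diag p u p domu h4u hp
      have fppu : f p p u ≠ 0 := by
        rw [hdiag]; exact (hf.self_mem p u domu).2
      have hchain : chain6 v p p p y u := by
        refine ⟨b, c, c, c, d, a + 1, pv, ?_, ?_, ?_, py, ?_,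
          hbc.le, le_refl c, le_refl c, hcd, hda, by linarith⟩
        · rw [h2] at hpt; exact hpt
        · rw [h2] at hpt; exact hpt
        · rw [h2] at hpt; exact hpt
        · rw [pr_add_one]; exact pu
      have := hf.eq_of_chain v p p p y u domv' (dom_pp hp) fvpy fppu (Or.inl hchain)
        (fun h => by rw [h]; exact four) (fun _ => four)
      rw [hsymv] at this
      rw [this, hdiag]
    · rcases lt_trichotomy t d with h3 | h3 | h3
      · -- Case 4 : x ≺ p ≺ y (the hard case)
        have hxory : x ∈ closure I ∨ y ∈ closure I := by
          refine dichot hI px py hpt ?_ h2 h3 hda (by linarith) (subset_closure hp) hu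
          rw [pr_add_one]; exact pu
        have hvnep : v = p → False := by
          intro h
          exact pr_ne b t (by linarith) (by linarith) (by rw [pv, hpt, h])
        rcases hxory with hxc | hyc
        · -- x ∈ closure I
          have hxnep : x = p → False := by
            intro h
            exact pr_ne c t h2 (by linarith) (by rw [px, hpt, h])
          have domx : (p, x) ∈ ConicDom I := dom_mk hp hxc
          have domx' : (x, p) ∈ ConicDom I := dom_mk' hp hxc
          have hpx_eq : f p x = f p u :=
            hf.eq_of_common p x u x domx domu (fun h => hxnep h)
              (hf.self_mem p x domx).2 fx
          have fxpu : f x p u ≠ 0 := by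
            rw [(hf.symm p x domx).symm, hpx_eq]
            exact (hf.self_mem p u domu).2
          have hchain : chain6 v x p p y u := by
            refine ⟨b, c, t, t, d, a + 1, pv, px, hpt, hpt, py, ?_,
              hbc.le, h2.le, le_refl t, h3, hda, by linarith⟩
            rw [pr_add_one]; exact pu
          have := hf.eq_of_chain v x p p y u domv' domx' fvpy fxpu (Or.inl hchain)
            (fun h => absurd h hvnep) (fun h => absurd h hxnep)
          rw [hsymv, (hf.symm p x domx).symm, hpx_eq] at this
          exact this.symm
        · -- y ∈ closure I
          have hynep : y = p → False := by
            intro h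
            exact pr_ne t d h3 (by linarith) (by rw [hpt, py, h])
          have domy : (p, y) ∈ ConicDom I := dom_mk hp hyc
          have domy' : (y, p) ∈ ConicDom I := dom_mk' hp hyc
          have hpy_eq : f p y = f p v :=
            hf.eq_of_common p y v y domy domv (fun h => hynep h)
              (hf.self_mem p y domy).2 fy
          have fypv : f y p v ≠ 0 := by
            rw [(hf.symm p y domy).symm, hpy_eq]
            exact (hf.self_mem p v domv).2
          have hunep : u = p → False := by
            intro h
            exact pr_ne t (a + 1) (by linarith) (by linarith)
              (hpt.trans (((pr_add_one a).trans pu).trans h).symm)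
          have hchain : chain6rev u y p p x v := by
            refine ⟨a + 1, d, t, t, c, b, ?_, py, hpt, hpt, px, pv,
              hda.le, h3.le, le_refl t, h2, hbc, by linarith⟩
            rw [pr_add_one]; exact pu
          have := hf.eq_of_chain u y p p x v domu' domy' fupx fypv (Or.inr hchain)
            (fun h => absurd h hunep) (fun h => absurd h hynep)
          rw [hsymu, (hf.symm p y domy).symm, hpy_eq] at this
          exact this
      · -- Case 5 : p = y
        have hyp : y = p := by rw [← py, ← hpt, h3]
        have h4v : 4 ≤ f p v p := hy4 hyp
        have hdiag : f p p = f p v := hf.eq_diag p v p domv h4v hp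
        have fppv : f p p v ≠ 0 := by
          rw [hdiag]; exact (hf.self_mem p v domv).2
        have hpd : pr d = p := by rw [← h3]; exact hpt
        have hunep : p = u → False := by
          intro h
          exact pr_ne d (a + 1) hda (by linarith)
            (hpd.trans (h.trans ((pr_add_one a).trans pu).symm))
        have hchain : chain6 p p p u v x := by
          refine ⟨d, d, d, a + 1, b + 1, c + 1, hpd, hpd, hpd, ?_, ?_, ?_,
            le_refl d, le_refl d, hda.le, by linarith, by linarith, by linarith⟩
          · rw [pr_add_one]; exact pu
          · rw [pr_add_one]; exact pv
          · rw [pr_add_one]; exact px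
        have := hf.eq_of_chain p p p u v x (dom_pp hp) domu fppv fx (Or.inl hchain)
          (fun _ => four) (fun h => absurd h hunep)
        rw [← this, hdiag]
      · -- Case 6 : y ≺ p
        have hunep : p = u → False := by
          intro h
          exact pr_ne t (a + 1) htlt (by linarith)
            (hpt.trans (h.trans ((pr_add_one a).trans pu).symm))
        have hvnep : p = v → False := by
          intro h
          exact pr_ne t (b + 1) (by linarith) (by linarith)
            (hpt.trans (h.trans ((pr_add_one b).trans pv).symm))
        have hchain : chain6 p p u v x y := by
          refine ⟨t, t, a + 1, b + 1, c + 1, d + 1, hpt, hpt, ?_, ?_, ?_, ?_,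
            le_refl t, htlt.le, by linarith, by linarith, by linarith, by linarith⟩
          · rw [pr_add_one]; exact pu
          · rw [pr_add_one]; exact pv
          · rw [pr_add_one]; exact px
          · rw [pr_add_one]; exact py
        exact hf.eq_of_chain p p u v x y domu domv fx fy (Or.inl hchain)
          (fun h => absurd h.symm (fun hh => hunep hh.symm))
          (fun h => absurd h (fun hh => hvnep hh))

lemma fstar_congr {f : S1 → S1 → S1 → ℕ∞} {p q q' : S1}
    (h : f p q = f p q') : Fstar f p q = Fstar f p q' := by
  unfold Fstar suppF
  rw [h]

end Sys

/-- For each `p ∈ I`, the family `q ↦ F*_{p,q}` is an intrinsic circle system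
on the closure of `I`. -/
theorem fstar_isIntrinsicCircleSystem
    (I : Set S1) (hI : IsArc I ∨ I = Set.univ)
    (f : S1 → S1 → S1 → ℕ∞)
    (hf : IsIntrinsicConicSystem I f)
    (p : S1) (hp : p ∈ I) :
    IsIntrinsicCircleSystem (closure I) (fun q => Fstar f p q) := by
  constructor
  · -- isClosed
    intro q hq
    have hdom : (p, q) ∈ ConicDom I := dom_mk hp hq
    by_cases h4 : 4 ≤ f p q p
    · have he : Fstar f p q = suppF f p q := by
        ext r
        exact ⟨fun h => h.1, fun h => ⟨h, fun _ => h4⟩⟩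
      rw [he]
      exact hf.supp_closed p q hdom
    · by_cases h0 : f p q p = 0
      · have he : Fstar f p q = suppF f p q := by
          ext r
          refine ⟨fun h => h.1, fun h => ⟨h, fun hrp => ?_⟩⟩
          exact absurd h0 (hrp ▸ h)
        rw [he]
        exact hf.supp_closed p q hdom
      · have h2 : f p q p = 2 := eq_two_of hf hdom h0 h4
        obtain ⟨U, hUopen, hpU, hUcap⟩ := hf.isolated_of_two p q hdom h2
        have he : Fstar f p q = suppF f p q \ {p} := by
          ext r
          simp only [Fstar, Set.mem_setOf_eq, Set.mem_diff, Set.mem_singleton_iff]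
          constructor
          · rintro ⟨hr, himp⟩
            exact ⟨hr, fun hrp => h4 (himp hrp)⟩
          · rintro ⟨hr, hne⟩
            exact ⟨hr, fun hrp => absurd hrp hne⟩
        rw [he, ← isOpen_compl_iff]
        have hcompl : (suppF f p q \ {p})ᶜ = (suppF f p q)ᶜ ∪ U := by
          ext r
          simp only [Set.mem_compl_iff, Set.mem_diff, Set.mem_singleton_iff,
            Set.mem_union, not_and, not_not]
          constructor
          · intro h
            by_cases hr : r ∈ suppF f p q
            · right
              have := h hr
              rw [this]
              exact hpU
            · left; exact hr
          · intro h hr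
            rcases h with h | h
            · exact absurd hr h
            · have : r ∈ U ∩ suppF f p q := ⟨h, hr⟩
              rw [hUcap] at this
              exact this
        rw [hcompl]
        exact ((hf.supp_closed p q hdom).isOpen_compl).union hUopen
  · -- mem_self
    intro q hq
    refine ⟨(hf.self_mem p q (dom_mk hp hq)).2, fun h => ?_⟩
    rw [h]
    exact four_le_diag hI hf hp
  · -- eq_of_inter
    intro q hq q' hq' ⟨s, hs1, hs2⟩
    have hdom : (p, q) ∈ ConicDom I := dom_mk hp hq
    have hdom' : (p, q') ∈ ConicDom I := dom_mk hp hq'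
    by_cases hsp : s = p
    · have h4 : 4 ≤ f p q p := hs1.2 hsp
      have h4' : 4 ≤ f p q' p := hs2.2 hsp
      have e1 : f p p = f p q := hf.eq_diag p q p hdom h4 hp
      have e2 : f p p = f p q' := hf.eq_diag p q' p hdom' h4' hp
      exact fstar_congr (e1 ▸ e2)
    · exact fstar_congr (hf.eq_of_common p q q' s hdom hdom' hsp hs1.1 hs2.1)
  · -- eq_of_cyc
    intro u hu v hv x hx y hy hcyc
    exact fstar_congr (key_eq hI hf hp hu hv hx hy hcyc)
  · -- mem_of_tendsto
    intro pn qn p1 q hpn hqn hp1 hq htp htq hmem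
    have hpnC : ∀ n, pn n ∈ closure I := fun n => interior_subset (hpn n)
    have hqnC : ∀ n, qn n ∈ closure I := fun n => interior_subset (hqn n)
    have domn : ∀ n, ((fun _ => p) n, pn n) ∈ ConicDom I := fun n => dom_mk hp (hpnC n)
    have dom1 : (p, p1) ∈ ConicDom I := dom_mk hp hp1
    have hsupp : ∀ n, f p (pn n) (qn n) ≠ 0 := fun n => (hmem n).1
    have hbase := hf.limit_mult (fun _ => p) pn qn qn p p1 q 2 2 domn dom1
      tendsto_const_nhds htp (fun n => ⟨hqnC n, hsupp n⟩) (fun n => ⟨hqnC n, hsupp n⟩)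
      hq htq htq (fun n => two_le_of_ne hf (domn n) (hsupp n))
      (fun n => two_le_of_ne hf (domn n) (hsupp n))
    have hq0 : f p p1 q ≠ 0 := by
      intro h0
      have hh := hbase.1
      rw [h0] at hh
      simp at hh
    refine ⟨hq0, fun hqp => ?_⟩
    rw [hqp] at htq
    by_cases hfreq : ∃ᶠ n in atTop, qn n = p
    · obtain ⟨φ, hφmono, hφ⟩ := extraction_of_frequently_atTop hfreq
      have h4n : ∀ n, ((4:ℕ):ℕ∞) ≤ f p (pn (φ n)) p := by
        intro n
        rw [cast4]
        have := (hmem (φ n)).2 (hφ n)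
        exact this
      have hsupp4 : ∀ n, f p (pn (φ n)) p ≠ 0 :=
        fun n => (hf.self_mem p (pn (φ n)) (domn (φ n))).1
      have hb4 := hf.limit_mult (fun _ => p) (fun n => pn (φ n)) (fun _ => p) (fun _ => p)
        p p1 p 4 4 (fun n => domn (φ n)) dom1 tendsto_const_nhds
        (htp.comp hφmono.tendsto_atTop)
        (fun n => ⟨subset_closure hp, hsupp4 n⟩) (fun n => ⟨subset_closure hp, hsupp4 n⟩)
        (subset_closure hp) tendsto_const_nhds tendsto_const_nhds h4n h4n
      have hh := hb4.1
      rw [show max 4 4 = 4 from rfl, cast4] at hh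
      exact hh
    · rw [Filter.not_frequently] at hfreq
      obtain ⟨N, hN⟩ := (Filter.eventually_atTop).1 hfreq
      have hshift : Tendsto (fun n : ℕ => n + N) atTop atTop := tendsto_add_atTop_nat N
      have hb := hf.limit_mult (fun _ => p) (fun n => pn (n + N)) (fun n => qn (n + N))
        (fun _ => p) p p1 p 2 2 (fun n => domn (n + N)) dom1 tendsto_const_nhds
        (htp.comp hshift)
        (fun n => ⟨hqnC (n + N), hsupp (n + N)⟩)
        (fun n => ⟨subset_closure hp, (hf.self_mem p (pn (n + N)) (domn (n + N))).1⟩)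
        (subset_closure hp) (htq.comp hshift) tendsto_const_nhds
        (fun n => two_le_of_ne hf (domn (n + N)) (hsupp (n + N)))
        (fun n => two_le_of_ne hf (domn (n + N)) (hf.self_mem p (pn (n + N)) (domn (n + N))).1)
      have hstrict := hb.2 (fun n => hN (n + N) (Nat.le_add_left N n))
      have h2lt : (2:ℕ∞) < f p p1 p := by
        rw [← cast2]
        simpa using hstrict
      exact four_le_of_two_lt hf dom1 h2lt
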